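/- Let G be a compact abelian topological group and H a closed subgroup of G. Then λ(G) ≤ λ(G/H), where λ denotes the Lehmer constant. -/

import Mathlib

open MeasureTheory Finset

/-- `f` is a finite integer-coefficient linear combination of continuous characters of `G`. -/
def IsCharComb (G : Type*) [CommGroup G] [TopologicalSpace G] (f : G → ℂ) : Prop :=
  ∃ (s : Finset (ContinuousMonoidHom G Circle)) (c : ContinuousMonoidHom G Circle → ℤ),
    f = fun x => ∑ χ ∈ s, (c χ : ℂ) * (χ x : ℂ)

/-- Logarithmic Mahler measure of `f` with respect to the measure `μ`. -/
noncomputable def logMahler {G : Type*} [MeasurableSpace G] (μ : Measure G) (f : G → ℂ) : ℝ :=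
  ∫ x, Real.log ‖f x‖ ∂μ

/-- The Lehmer constant of a compact abelian group `G` with Haar measure `μ`. -/
noncomputable def lehmer (G : Type*) [CommGroup G] [TopologicalSpace G] [MeasurableSpace G]
    (μ : Measure G) : ℝ :=
  sInf {r : ℝ | ∃ f : G → ℂ, IsCharComb G f ∧ logMahler μ f = r ∧ 0 < r}

/-- Lemma 2.2: if `H` is a closed subgroup of the compact abelian group `G`, then
`λ(G) ≤ λ(G/H)`. -/
theorem lehmer_le_lehmer_quotient {G : Type*} [CommGroup G] [TopologicalSpace G]
    [IsTopologicalGroup G] [CompactSpace G] [MeasurableSpace G] [BorelSpace G]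
    (μ : Measure G) [μ.IsHaarMeasure] [IsProbabilityMeasure μ]
    (H : Subgroup G) (hH : IsClosed (H : Set G))
    [MeasurableSpace (G ⧸ H)] [BorelSpace (G ⧸ H)]
    (ν : Measure (G ⧸ H)) [ν.IsHaarMeasure] [IsProbabilityMeasure ν] :
    lehmer G μ ≤ lehmer (G ⧸ H) ν := by
  have hsurj : Function.Surjective (QuotientGroup.mk' H) := QuotientGroup.mk'_surjective H
  have hmeas : Measurable (QuotientGroup.mk' H : G →* G ⧸ H) :=
    continuous_quotient_mk'.measurable
  have hmap : μ.map (QuotientGroup.mk' H) = ν := by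
    haveI : (μ.map (QuotientGroup.mk' H)).IsHaarMeasure :=
      Measure.isHaarMeasure_map_of_isFiniteMeasure μ (QuotientGroup.mk' H) continuous_quotient_mk' hsurj
    haveI : IsProbabilityMeasure (μ.map (QuotientGroup.mk' H)) :=
      Measure.isProbabilityMeasure_map hmeas.aemeasurable
    exact Measure.isHaarMeasure_eq_of_isProbabilityMeasure _ ν
  classical
  unfold lehmer
  apply csInf_le_csInf
  · exact ⟨0, fun r ⟨f, _, _, hr⟩ => hr.le⟩
  · refine ⟨Real.log 2, fun x => ∑ χ ∈ ({1} : Finset (ContinuousMonoidHom (G ⧸ H) Circle)),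
      ((fun _ => (2 : ℤ)) χ : ℂ) * (χ x : ℂ), ⟨{1}, fun _ => 2, rfl⟩, ?_, Real.log_pos (by norm_num)⟩
    unfold logMahler
    simp
  · rintro r ⟨f, ⟨s, c, hf⟩, hlog, hr⟩
    have hfc : Continuous f := by rw [hf]; fun_prop
    refine ⟨fun x => f (QuotientGroup.mk' H x), ?_, ?_, hr⟩
    · set g : ContinuousMonoidHom (G ⧸ H) Circle → ContinuousMonoidHom G Circle :=
        fun χ => χ.comp ⟨QuotientGroup.mk' H, continuous_quotient_mk'⟩ with hg
      refine ⟨s.image g, fun χ' => ∑ χ ∈ s.filter (fun χ => g χ = χ'), c χ, ?_⟩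
      funext x
      simp only [hf]
      rw [← Finset.sum_fiberwise_of_maps_to (g := g)
        (fun χ hχ => Finset.mem_image_of_mem g hχ)
        (fun χ => (c χ : ℂ) * ((χ : G ⧸ H → Circle) (QuotientGroup.mk' H x) : ℂ))]
      refine Finset.sum_congr rfl fun χ' _ => ?_
      rw [Finset.sum_congr rfl (fun χ hχ => by
        rw [← (Finset.mem_filter.1 hχ).2]
        rfl : ∀ χ ∈ s.filter (fun χ => g χ = χ'), (c χ : ℂ) * ((χ : G ⧸ H → Circle) (QuotientGroup.mk' H x) : ℂ) = (c χ : ℂ) * (χ' x : ℂ)), ← Finset.sum_mul]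
      push_cast
      ring
    · rw [← hlog]
      unfold logMahler
      rw [← hmap]
      exact (integral_map hmeas.aemeasurable
        ((Real.measurable_log.comp (continuous_norm.comp hfc).measurable).aestronglyMeasurable)).symm
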